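/- Let α ∈ ℂ with |α| = 1 and −π/4 < Arg α < π/4 (equivalently Re α > |Im α|). Then the 4×4 matrix A = [[α+conj(α), −α, −conj(α), 0], [−conj(α), α+conj(α), 0, −α], [−α, 0, α+conj(α), −conj(α)], [0, −conj(α), −α, α+conj(α)]] is Hermitian positive semidefinite of rank 3 (corank one), and its kernel is spanned by the vector (1, 1, 1, 1)ᵀ ∈ ℂ⁴. -/

import Mathlib

open scoped ComplexOrder

set_option maxHeartbeats 2000000 in
theorem stmt16 (α : ℂ) (hα : ‖α‖ = 1)
    (harg1 : -(Real.pi / 4) < Complex.arg α) (harg2 : Complex.arg α < Real.pi / 4) :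
    (!![α + (starRingEnd ℂ) α, -α, -(starRingEnd ℂ) α, 0;
        -(starRingEnd ℂ) α, α + (starRingEnd ℂ) α, 0, -α;
        -α, 0, α + (starRingEnd ℂ) α, -(starRingEnd ℂ) α;
        0, -(starRingEnd ℂ) α, -α, α + (starRingEnd ℂ) α] :
      Matrix (Fin 4) (Fin 4) ℂ).PosSemidef ∧
    (!![α + (starRingEnd ℂ) α, -α, -(starRingEnd ℂ) α, 0;
        -(starRingEnd ℂ) α, α + (starRingEnd ℂ) α, 0, -α;
        -α, 0, α + (starRingEnd ℂ) α, -(starRingEnd ℂ) α;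
        0, -(starRingEnd ℂ) α, -α, α + (starRingEnd ℂ) α] :
      Matrix (Fin 4) (Fin 4) ℂ).rank = 3 ∧
    ∀ x : Fin 4 → ℂ,
      (!![α + (starRingEnd ℂ) α, -α, -(starRingEnd ℂ) α, 0;
          -(starRingEnd ℂ) α, α + (starRingEnd ℂ) α, 0, -α;
          -α, 0, α + (starRingEnd ℂ) α, -(starRingEnd ℂ) α;
          0, -(starRingEnd ℂ) α, -α, α + (starRingEnd ℂ) α] :
        Matrix (Fin 4) (Fin 4) ℂ).mulVec x = 0 ↔
      ∃ c : ℂ, x = c • ![1, 1, 1, 1] := by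
  set A : Matrix (Fin 4) (Fin 4) ℂ :=
    !![α + (starRingEnd ℂ) α, -α, -(starRingEnd ℂ) α, 0;
        -(starRingEnd ℂ) α, α + (starRingEnd ℂ) α, 0, -α;
        -α, 0, α + (starRingEnd ℂ) α, -(starRingEnd ℂ) α;
        0, -(starRingEnd ℂ) α, -α, α + (starRingEnd ℂ) α] with hA
  have hα0 : α ≠ 0 := by
    intro h; rw [h] at hα; simp at hα
  have hre : α.re = Real.cos α.arg := by
    rw [Complex.cos_arg hα0, hα, div_one]
  have him : α.im = Real.sin α.arg := by
    rw [Complex.sin_arg, hα, div_one]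
  have hpi := Real.pi_pos
  have hc1 : 0 < Real.cos (α.arg + Real.pi / 4) := by
    apply Real.cos_pos_of_mem_Ioo
    constructor <;> [linarith; linarith]
  have hc2 : 0 < Real.cos (α.arg - Real.pi / 4) := by
    apply Real.cos_pos_of_mem_Ioo
    constructor <;> [linarith; linarith]
  rw [Real.cos_add, Real.cos_pi_div_four, Real.sin_pi_div_four] at hc1
  rw [Real.cos_sub, Real.cos_pi_div_four, Real.sin_pi_div_four] at hc2
  have hs2 : (0:ℝ) < Real.sqrt 2 / 2 := by positivity
  have hab1 : α.im < α.re := by rw [hre, him]; nlinarith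
  have hab2 : -α.re < α.im := by rw [hre, him]; nlinarith
  -- complex-coefficient Fourier identity
  have quadC : ∀ x : Fin 4 → ℂ, 4 * (dotProduct (star x) (A.mulVec x)) =
      (α + (starRingEnd ℂ) α + Complex.I * (α - (starRingEnd ℂ) α)) *
        ((x 0 + Complex.I * x 1 - x 3 - Complex.I * x 2) *
          (starRingEnd ℂ) (x 0 + Complex.I * x 1 - x 3 - Complex.I * x 2))
      + 2 * (α + (starRingEnd ℂ) α) *
        ((x 0 - x 1 + x 3 - x 2) * (starRingEnd ℂ) (x 0 - x 1 + x 3 - x 2))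
      + (α + (starRingEnd ℂ) α - Complex.I * (α - (starRingEnd ℂ) α)) *
        ((x 0 - Complex.I * x 1 - x 3 + Complex.I * x 2) *
          (starRingEnd ℂ) (x 0 - Complex.I * x 1 - x 3 + Complex.I * x 2)) := by
    intro x
    simp only [hA, Matrix.mulVec, dotProduct, Fin.sum_univ_four, Pi.star_apply,
      RCLike.star_def, Matrix.of_apply, Matrix.cons_val', Matrix.cons_val_zero,
      Matrix.cons_val_one, Matrix.head_cons, Matrix.cons_val_two, Matrix.tail_cons,
      Matrix.cons_val_three, Matrix.head_fin_const, Matrix.empty_val', Matrix.cons_val_fin_one,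
      _root_.map_add, _root_.map_sub, _root_.map_mul, Complex.conj_I]
    ring_nf
    simp only [Complex.I_sq]
    ring
  -- the three eigenvalue coefficients are nonnegative reals
  have co1 : α + (starRingEnd ℂ) α + Complex.I * (α - (starRingEnd ℂ) α)
      = ((2 * α.re - 2 * α.im : ℝ) : ℂ) := by
    rw [Complex.add_conj, Complex.sub_conj]
    push_cast
    ring_nf
    rw [Complex.I_sq]
    ring
  have co2 : 2 * (α + (starRingEnd ℂ) α) = ((4 * α.re : ℝ) : ℂ) := by
    rw [Complex.add_conj]; push_cast; ring
  have co3 : α + (starRingEnd ℂ) α - Complex.I * (α - (starRingEnd ℂ) α)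
      = ((2 * α.re + 2 * α.im : ℝ) : ℂ) := by
    rw [Complex.add_conj, Complex.sub_conj]
    push_cast
    ring_nf
    rw [Complex.I_sq]
    ring
  have quad : ∀ x : Fin 4 → ℂ, 4 * (dotProduct (star x) (A.mulVec x)) =
      (((2 * α.re - 2 * α.im) *
          Complex.normSq (x 0 + Complex.I * x 1 - x 3 - Complex.I * x 2)
        + 4 * α.re * Complex.normSq (x 0 - x 1 + x 3 - x 2)
        + (2 * α.re + 2 * α.im) *
          Complex.normSq (x 0 - Complex.I * x 1 - x 3 + Complex.I * x 2) : ℝ) : ℂ) := by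
    intro x
    rw [quadC x, co1, co2, co3, Complex.mul_conj, Complex.mul_conj, Complex.mul_conj]
    push_cast
    ring
  have hker : ∀ x : Fin 4 → ℂ, A.mulVec x = 0 ↔ ∃ c : ℂ, x = c • ![1, 1, 1, 1] := by
    intro x
    constructor
    · intro h
      have h0 : 4 * (dotProduct (star x) (A.mulVec x)) = 0 := by
        rw [h, dotProduct_zero, mul_zero]
      rw [quad x] at h0
      have h0' : (2 * α.re - 2 * α.im) *
            Complex.normSq (x 0 + Complex.I * x 1 - x 3 - Complex.I * x 2)
          + 4 * α.re * Complex.normSq (x 0 - x 1 + x 3 - x 2)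
          + (2 * α.re + 2 * α.im) *
            Complex.normSq (x 0 - Complex.I * x 1 - x 3 + Complex.I * x 2) = 0 := by
        exact_mod_cast h0
      have n1 := Complex.normSq_nonneg (x 0 + Complex.I * x 1 - x 3 - Complex.I * x 2)
      have n2 := Complex.normSq_nonneg (x 0 - x 1 + x 3 - x 2)
      have n3 := Complex.normSq_nonneg (x 0 - Complex.I * x 1 - x 3 + Complex.I * x 2)
      have hz1 : x 0 + Complex.I * x 1 - x 3 - Complex.I * x 2 = 0 := by
        rw [← Complex.normSq_eq_zero]; nlinarith
      have hz2 : x 0 - x 1 + x 3 - x 2 = 0 := by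
        rw [← Complex.normSq_eq_zero]; nlinarith
      have hz3 : x 0 - Complex.I * x 1 - x 3 + Complex.I * x 2 = 0 := by
        rw [← Complex.normSq_eq_zero]; nlinarith
      have hx1 : x 1 = x 0 := by
        linear_combination (-(1 + Complex.I)/4) * hz1 + (-(1:ℂ)/2) * hz2
          + (-(1 - Complex.I)/4) * hz3 + ((x 1 - x 2)/2) * Complex.I_sq
      have hx2 : x 2 = x 0 := by
        linear_combination ((Complex.I - 1)/4) * hz1 + (-(1:ℂ)/2) * hz2
          + ((-Complex.I - 1)/4) * hz3 + ((x 2 - x 1)/2) * Complex.I_sq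
      have hx3 : x 3 = x 0 := by
        linear_combination (-(1:ℂ)/2) * hz1 + (-(1:ℂ)/2) * hz3
      refine ⟨x 0, ?_⟩
      funext i
      fin_cases i
      · show x 0 = x 0 • ![(1:ℂ),1,1,1] 0; simp
      · show x 1 = x 0 • ![(1:ℂ),1,1,1] 1; simp [hx1]
      · show x 2 = x 0 • ![(1:ℂ),1,1,1] 2; simp [hx2]
      · show x 3 = x 0 • ![(1:ℂ),1,1,1] 3; simp [hx3]
    · rintro ⟨c, rfl⟩
      funext i
      fin_cases i <;>
        simp [hA, Matrix.mulVec, dotProduct, Fin.sum_univ_four] <;>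
        ring_nf
  have hHerm : A.IsHermitian := by
    rw [Matrix.IsHermitian]
    ext i j
    fin_cases i <;> fin_cases j <;>
      simp [hA, Matrix.conjTranspose_apply] <;> ring
  have hones : (![1, 1, 1, 1] : Fin 4 → ℂ) ≠ 0 := by
    intro h
    have := congrFun h 0
    simp at this
  refine ⟨Matrix.PosSemidef.of_dotProduct_mulVec_nonneg hHerm ?_, ?_, hker⟩
  · intro x
    have hq := quad x
    have hnn : (0:ℝ) ≤ (2 * α.re - 2 * α.im) *
          Complex.normSq (x 0 + Complex.I * x 1 - x 3 - Complex.I * x 2)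
        + 4 * α.re * Complex.normSq (x 0 - x 1 + x 3 - x 2)
        + (2 * α.re + 2 * α.im) *
          Complex.normSq (x 0 - Complex.I * x 1 - x 3 + Complex.I * x 2) := by
      have n1 := Complex.normSq_nonneg (x 0 + Complex.I * x 1 - x 3 - Complex.I * x 2)
      have n2 := Complex.normSq_nonneg (x 0 - x 1 + x 3 - x 2)
      have n3 := Complex.normSq_nonneg (x 0 - Complex.I * x 1 - x 3 + Complex.I * x 2)
      nlinarith
    have hQ : dotProduct (star x) (A.mulVec x) =
        ((((2 * α.re - 2 * α.im) *
          Complex.normSq (x 0 + Complex.I * x 1 - x 3 - Complex.I * x 2)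
        + 4 * α.re * Complex.normSq (x 0 - x 1 + x 3 - x 2)
        + (2 * α.re + 2 * α.im) *
          Complex.normSq (x 0 - Complex.I * x 1 - x 3 + Complex.I * x 2)) / 4 : ℝ) : ℂ) := by
      apply mul_left_cancel₀ (show (4:ℂ) ≠ 0 by norm_num)
      rw [hq]; push_cast; ring
    rw [hQ]
    exact_mod_cast (by linarith : (0:ℝ) ≤ ((2 * α.re - 2 * α.im) *
          Complex.normSq (x 0 + Complex.I * x 1 - x 3 - Complex.I * x 2)
        + 4 * α.re * Complex.normSq (x 0 - x 1 + x 3 - x 2)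
        + (2 * α.re + 2 * α.im) *
          Complex.normSq (x 0 - Complex.I * x 1 - x 3 + Complex.I * x 2)) / 4)
  · have hkerEq : LinearMap.ker A.mulVecLin = Submodule.span ℂ {![1, 1, 1, 1]} := by
      ext x
      rw [LinearMap.mem_ker, Matrix.mulVecLin_apply, hker x, Submodule.mem_span_singleton]
      constructor
      · rintro ⟨c, rfl⟩; exact ⟨c, rfl⟩
      · rintro ⟨c, rfl⟩; exact ⟨c, rfl⟩
    have hrn := LinearMap.finrank_range_add_finrank_ker A.mulVecLin
    have hdim : Module.finrank ℂ (Fin 4 → ℂ) = 4 := by simp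
    rw [hkerEq, finrank_span_singleton hones, hdim] at hrn
    have hrk : A.rank = Module.finrank ℂ (LinearMap.range A.mulVecLin) := rfl
    omega
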